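/- For positive integers $n$ and $N$ with $N\ge 1$, the coefficient of $z^n$ in the product $\left(\sum_{j\ge0}\begin{bmatrix}N+j-1\\j\end{bmatrix}Q^jz^j\right)\cdot\left(\sum_{j=0}^{N}\begin{bmatrix}N\\j\end{bmatrix}z^j\right)$ with $N=(a+1)n$ equals $[(a+1)n]\cdot\sum_{j=0}^{n}\frac{\prod_{k=1}^{n-1}[an+j+k]}{[j]!\,[n-j]!}Q^j$, where $[m]!=[m][m-1]\cdots[1]$. -/

import Mathlib

open Finset PowerSeries

/-- Coefficient field: rational functions in `Q` and `v = q^{1/2}`. -/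
noncomputable abbrev KK : Type := RatFunc (RatFunc ℚ)

/-- The variable `v = q^{1/2}`. -/
noncomputable def vv : KK := RatFunc.X

/-- The variable `Q`. -/
noncomputable def QQ : KK := RatFunc.C RatFunc.X

/-- `[m] = v^m - v^{-m}`. -/
noncomputable def qBracket (m : ℤ) : KK := vv ^ m - vv ^ (-m)

/-- quantum factorial `[m]! = [m][m-1]⋯[1]`. -/
noncomputable def qFact (m : ℕ) : KK := ∏ i ∈ Finset.Icc 1 m, qBracket i

/-- `[m][m+1]⋯[m+s-1]`. -/
noncomputable def qP (m s : ℕ) : KK := ∏ t ∈ Finset.range s, qBracket ((m + t : ℕ))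

lemma qP_add (m s t : ℕ) : qP m (s + t) = qP m s * qP (m + s) t := by
  unfold qP
  rw [Finset.prod_range_add]
  congr 1
  refine Finset.prod_congr rfl fun x _ => ?_
  congr 2
  omega

lemma qP_succ (m s : ℕ) : qP m (s + 1) = qP m s * qBracket ((m + s : ℕ)) := by
  unfold qP
  rw [Finset.prod_range_succ]

lemma qP_one (m : ℕ) : qP m 1 = qBracket (m : ℕ) := by
  simp [qP]

lemma lem1 (M j : ℕ) :
    (∏ i ∈ Finset.Icc 1 j, qBracket ((M : ℤ) + j - i)) = qP M j := by
  unfold qP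
  rw [← Finset.prod_range_reflect, ← Finset.Ico_add_one_right_eq_Icc, Finset.prod_Ico_eq_prod_range]
  refine Finset.prod_congr (by simp) fun t ht => ?_
  rw [Finset.mem_range] at ht
  congr 1
  omega

lemma lem2 (M m : ℕ) (h : m ≤ M) :
    (∏ i ∈ Finset.Icc 1 m, qBracket ((M : ℤ) - i + 1)) = qP (M + 1 - m) m := by
  unfold qP
  rw [← Finset.prod_range_reflect, ← Finset.Ico_add_one_right_eq_Icc, Finset.prod_Ico_eq_prod_range]
  refine Finset.prod_congr (by simp) fun t ht => ?_
  rw [Finset.mem_range] at ht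
  congr 1
  omega

lemma qFact_eq (m : ℕ) : qFact m = qP 1 m := by
  unfold qFact qP
  rw [← Finset.Ico_add_one_right_eq_Icc, Finset.prod_Ico_eq_prod_range]
  refine Finset.prod_congr (by simp) fun t _ => ?_
  rfl

lemma lemRHS (b n j : ℕ) :
    (∏ k ∈ Finset.Icc 1 (n - 1), qBracket ((b + j + k : ℕ))) = qP (b + j + 1) (n - 1) := by
  unfold qP
  rw [← Finset.Ico_add_one_right_eq_Icc, Finset.prod_Ico_eq_prod_range]
  refine Finset.prod_congr (by simp) fun t _ => ?_
  congr 1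
  omega

lemma key (a n j : ℕ) (hn : 0 < n) (hj : j ≤ n) :
    qP ((a + 1) * n) j * qP (a * n + j + 1) (n - j)
      = qBracket (((a : ℤ) + 1) * n) * qP (a * n + j + 1) (n - 1) := by
  have hm : (a + 1) * n = a * n + n := by ring
  have hcast : ((((a + 1) * n : ℕ)) : ℤ) = ((a : ℤ) + 1) * n := by push_cast; ring
  by_cases hjn : j < n
  · -- j < n
    set s := n - j - 1 with hs
    have hns : n - j = s + 1 := by omega
    have h2 : a * n + j + 1 + s = (a + 1) * n := by omega
    have h3 : qP (a * n + j + 1) (n - 1) = qP (a * n + j + 1) s * qP ((a + 1) * n) j := by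
      rw [show n - 1 = s + j by omega, qP_add, h2]
    rw [hns, qP_succ, h2, h3, ← hcast]
    ring
  · -- j = n
    obtain rfl : j = n := le_antisymm hj (not_lt.mp hjn)
    rw [Nat.sub_self]
    have h1 : qP ((a + 1) * j) j = qP ((a + 1) * j) 1 * qP ((a + 1) * j + 1) (j - 1) := by
      rw [← qP_add]; congr 1; omega
    rw [show qP (a * j + j + 1) 0 = 1 by simp [qP], mul_one, h1, qP_one,
      show (a + 1) * j + 1 = a * j + j + 1 by ring, ← hcast]

/-- The coefficient of `z^n` in
`(∑_{j≥0} [N+j-1; j] Q^j z^j) · (∑_{j=0}^{N} [N; j] z^j)` with `N = (a+1)n`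
equals `[(a+1)n] · ∑_{j=0}^{n} (∏_{k=1}^{n-1} [an+j+k]) / ([j]! [n-j]!) · Q^j`. -/
theorem coeff_qproduct_eq (a n : ℕ) (hn : 0 < n) :
    PowerSeries.coeff (R := KK) n
      ((PowerSeries.mk fun j =>
          (∏ i ∈ Finset.Icc 1 j, qBracket (((a + 1) * n : ℕ) + j - i) / qBracket i) * QQ ^ j) *
        (∑ j ∈ Finset.range ((a + 1) * n + 1),
          (∏ i ∈ Finset.Icc 1 j, qBracket ((((a + 1) * n : ℕ) : ℤ) - i + 1) / qBracket i) •
            (PowerSeries.X : PowerSeries KK) ^ j))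
    = qBracket ((a + 1) * n) *
        ∑ j ∈ Finset.range (n + 1),
          (∏ k ∈ Finset.Icc 1 (n - 1), qBracket ((a * n + j + k : ℕ))) /
            (qFact j * qFact (n - j)) * QQ ^ j := by
  have hm : (a + 1) * n = a * n + n := by ring
  have hnN : n ≤ (a + 1) * n := by nlinarith
  -- coefficient of the polynomial factor
  have hS : ∀ k, k ≤ (a + 1) * n →
      (PowerSeries.coeff (R := KK) k)
        (∑ j ∈ Finset.range ((a + 1) * n + 1),
          (∏ i ∈ Finset.Icc 1 j, qBracket ((((a + 1) * n : ℕ) : ℤ) - i + 1) / qBracket i) •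
            (PowerSeries.X : PowerSeries KK) ^ j)
      = ∏ i ∈ Finset.Icc 1 k, qBracket ((((a + 1) * n : ℕ) : ℤ) - i + 1) / qBracket i := by
    intro k hk
    rw [map_sum]
    simp only [LinearMap.map_smul, PowerSeries.coeff_X_pow, smul_eq_mul, mul_ite, mul_one,
      mul_zero]
    rw [Finset.sum_ite_eq (Finset.range ((a + 1) * n + 1)) k]
    simp [Finset.mem_range, Nat.lt_succ_of_le hk]
  rw [PowerSeries.coeff_mul, Finset.Nat.sum_antidiagonal_eq_sum_range_succ_mk,
    Finset.mul_sum]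
  refine Finset.sum_congr rfl fun j hj => ?_
  rw [Finset.mem_range, Nat.lt_succ_iff] at hj
  dsimp only
  rw [PowerSeries.coeff_mk, hS (n - j) (le_trans (Nat.sub_le n j) hnN)]
  -- now a pure algebraic identity
  rw [Finset.prod_div_distrib, Finset.prod_div_distrib, lem1,
    lem2 _ _ (le_trans (Nat.sub_le n j) hnN), lemRHS (a * n) n j]
  have hA : (a + 1) * n + 1 - (n - j) = a * n + j + 1 := by omega
  rw [hA]
  have hden1 : (∏ i ∈ Finset.Icc 1 j, qBracket (i : ℤ)) = qFact j := rfl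
  have hden2 : (∏ i ∈ Finset.Icc 1 (n - j), qBracket (i : ℤ)) = qFact (n - j) := rfl
  rw [hden1, hden2]
  have hkey := key a n j hn hj
  -- (X/c * Q^j) * (Y/d) = [N] * (Z/(c*d) * Q^j)  given X*Y = [N]*Z
  rw [mul_right_comm, div_mul_div_comm, hkey, mul_div_assoc, mul_assoc]
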